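/- Let a group $G$ act on a group $K$ preserving each term of an extended N-series $K_*=(K_n)_{n\geq 0}$ of $K$ (i.e., $g(K_n)=K_n$ for all $g\in G$, $n\geq 0$). Define $\mathcal{F}_m^{K_*}(G)=\{g\in G\mid g(k)k^{-1}\in K_{m+n}\text{ for all }k\in K_n,\ n\geq 0\}$. Then $(\mathcal{F}_m^{K_*}(G))_{m\geq 0}$ is an extended N-series of $G$, i.e., $[\mathcal{F}_m^{K_*}(G),\mathcal{F}_n^{K_*}(G)]\leq \mathcal{F}_{m+n}^{K_*}(G)$ for all $m,n\geq 0$. -/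

import Mathlib

open scoped commutatorElement

/-- If a group `G` acts on a group `K` preserving each term of an extended N-series
`K_*` of `K`, then the Johnson filtration
`𝓕ₘ(G) = {g ∈ G | g(k)k⁻¹ ∈ K_{m+n} for all k ∈ Kₙ, n ≥ 0}`
is an extended N-series of `G`: each `𝓕ₘ(G)` is a subgroup, the filtration is
descending with `𝓕₀(G) = G`, and `[𝓕ₘ(G), 𝓕ₙ(G)] ≤ 𝓕_{m+n}(G)`. -/
theorem johnson_filtration_is_extended_NSeries {G K : Type*} [Group G] [Group K]
    (φ : G →* MulAut K) (Kf : ℕ → Subgroup K)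
    (hK0 : Kf 0 = ⊤) (hdesc : ∀ i, Kf (i + 1) ≤ Kf i)
    (hcomm : ∀ i j, ⁅Kf i, Kf j⁆ ≤ Kf (i + j))
    (hact : ∀ g n, Subgroup.map (φ g).toMonoidHom (Kf n) = Kf n) :
    let F : ℕ → G → Prop := fun m g => ∀ n, ∀ k ∈ Kf n, φ g k * k⁻¹ ∈ Kf (m + n)
    (∀ g : G, F 0 g) ∧
    (∀ m, F m (1 : G)) ∧
    (∀ m g h, F m g → F m h → F m (g * h)) ∧
    (∀ m g, F m g → F m g⁻¹) ∧
    (∀ m g, F (m + 1) g → F m g) ∧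
    (∀ m n g h, F m g → F n h → F (m + n) ⁅g, h⁆) := by
  intro F
  have hmono : Antitone Kf := antitone_nat_of_succ_le hdesc
  have hmem : ∀ (g : G) (n : ℕ) (k : K), k ∈ Kf n → φ g k ∈ Kf n := by
    intro g n k hk
    rw [← hact g n]
    exact ⟨k, hk, rfl⟩
  have hcancel : ∀ (g : G) (x : K), φ g (φ g⁻¹ x) = x := by
    intro g x
    rw [← MulAut.mul_apply, ← map_mul, mul_inv_cancel, map_one, MulAut.one_apply]
  have key : ∀ m n (g h : G), F m g → F n h → ∀ p, ∀ k ∈ Kf p,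
      φ g (φ h k) * (φ h (φ g k))⁻¹ ∈ Kf (m + n + p) := by
    intro m n g h hg hh p k hk
    have hB : φ h k * k⁻¹ ∈ Kf (n + p) := hh p k hk
    have hC : φ g k * k⁻¹ ∈ Kf (m + p) := hg p k hk
    have hA : φ g (φ h k * k⁻¹) * (φ h k * k⁻¹)⁻¹ ∈ Kf (m + (n + p)) :=
      hg (n + p) _ hB
    have hD : φ h (φ g k * k⁻¹) * (φ g k * k⁻¹)⁻¹ ∈ Kf (n + (m + p)) :=
      hh (m + p) _ hC
    have hBC : ⁅φ h k * k⁻¹, φ g k * k⁻¹⁆ ∈ Kf (m + n + p) := by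
      have := hcomm (n + p) (m + p) (Subgroup.commutator_mem_commutator hB hC)
      exact hmono (by omega) this
    have heq : φ g (φ h k) * (φ h (φ g k))⁻¹ =
        (φ g (φ h k * k⁻¹) * (φ h k * k⁻¹)⁻¹) * ⁅φ h k * k⁻¹, φ g k * k⁻¹⁆ *
          (φ h (φ g k * k⁻¹) * (φ g k * k⁻¹)⁻¹)⁻¹ := by
      simp only [map_mul, map_inv, commutatorElement_def]
      group
    rw [heq]
    exact mul_mem (mul_mem (hmono (by omega) hA) hBC)
      (inv_mem (hmono (by omega) hD))
  refine ⟨?_, ?_, ?_, ?_, ?_, ?_⟩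
  · intro g n k hk
    rw [zero_add]
    exact mul_mem (hmem g n k hk) (inv_mem hk)
  · intro m n k hk
    simpa using one_mem (Kf (m + n))
  · intro m g h hg hh n k hk
    have h1 : φ g (φ h k) * (φ h k)⁻¹ ∈ Kf (m + n) := hg n (φ h k) (hmem h n k hk)
    have h2 : φ h k * k⁻¹ ∈ Kf (m + n) := hmono (by omega) (hh n k hk)
    have heq : φ (g * h) k * k⁻¹ =
        (φ g (φ h k) * (φ h k)⁻¹) * (φ h k * k⁻¹) := by
      rw [map_mul, MulAut.mul_apply]; group
    rw [heq]
    exact mul_mem h1 h2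
  · intro m g hg n k hk
    have h1 : φ g (φ g⁻¹ k) * (φ g⁻¹ k)⁻¹ ∈ Kf (m + n) :=
      hg n (φ g⁻¹ k) (hmem g⁻¹ n k hk)
    rw [hcancel g k] at h1
    have heq : φ g⁻¹ k * k⁻¹ = (k * (φ g⁻¹ k)⁻¹)⁻¹ := by group
    rw [heq]
    exact inv_mem h1
  · intro m g hg n k hk
    exact hmono (by omega) (hg n k hk)
  · intro m n g h hg hh p k hk
    set k' := φ g⁻¹ (φ h⁻¹ k) with hk'def
    have hk' : k' ∈ Kf p := hmem g⁻¹ p _ (hmem h⁻¹ p k hk)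
    have h1 : φ h (φ g k') = k := by
      rw [hk'def, hcancel g, hcancel h]
    have h2 : φ ⁅g, h⁆ k = φ g (φ h k') := by
      rw [commutatorElement_def, map_mul, map_mul, map_mul, MulAut.mul_apply,
        MulAut.mul_apply, MulAut.mul_apply]
    rw [h2, ← h1]
    exact key m n g h hg hh p k' hk'
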